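/- arXiv:2312.01253 — 4 statements merged into one kernel-verified Lean document; each statement's English description precedes it below -/
import Mathlib

section
/- For every f ∈ ℝ, the expected squared magnitude of the Fourier transform of the FTN signal satisfies E[|x̂(f)|²] = P · T_x · |p̂(f)|². In other words, the power spectral density of the FTN signal with uncorrelated unit-variance symbols is P·|p̂(f)|², independent of the time-acceleration factor τ. -/
open MeasureTheory ProbabilityTheory Complex
open scoped FourierTransform RealInnerProductSpace

/-- Two `Memℒp _ 2` functions have an integrable product with conjugate. -/
lemma integrable_mul_conj_of_memL2 {Ω : Type*} [MeasurableSpace Ω] {μ : Measure Ω}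
    {g h : Ω → ℂ} (hg : MemLp g 2 μ) (hh : MemLp h 2 μ) :
    Integrable (fun ω => g ω * (starRingEnd ℂ) (h ω)) μ := by
  have hI := L2.integrable_inner (𝕜 := ℂ) (hh.toLp h) (hg.toLp g)
  refine hI.congr ?_
  filter_upwards [hh.coeFn_toLp, hg.coeFn_toLp] with ω h1 h2
  simp only [RCLike.inner_apply, h1, h2]

/-- **Power spectral density of the FTN signal.**
Given a real-valued pulse `p ∈ L¹(ℝ) ∩ L²(ℝ)`, constants `P, Tx, τ, T > 0`, an integer
`N ≥ 1`, and complex random variables `x 0, …, x (N-1)` with zero mean and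
uncorrelated unit-variance entries (`E[x n * conj (x m)] = δ_{nm}`), the FTN signal is
`X ω t = √(P·Tx/N) · ∑ n, x n ω · p (t − n τ T)`.  Then for every frequency `f`, the
expected squared magnitude of the Fourier transform of the FTN signal satisfies
`E[‖X̂(f)‖²] = P · Tx · ‖p̂(f)‖²`; i.e. the PSD is `P·‖p̂(f)‖²`, independent of `τ`. -/
theorem ftn_power_spectral_density
    {Ω : Type*} [MeasureSpace Ω] [IsProbabilityMeasure (ℙ : Measure Ω)]
    (p : ℝ → ℝ) (hp1 : Integrable p (volume : Measure ℝ))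
    (hp2 : MemLp p 2 (volume : Measure ℝ))
    (P Tx τ T : ℝ) (hP : 0 < P) (hTx : 0 < Tx) (hτ : 0 < τ) (hT : 0 < T)
    (N : ℕ) (hN : 1 ≤ N)
    (x : Fin N → Ω → ℂ)
    (hx2 : ∀ n, MemLp (x n) 2 (ℙ : Measure Ω))
    (hmean : ∀ n, (∫ ω, x n ω) = 0)
    (hcov : ∀ n m, (∫ ω, x n ω * (starRingEnd ℂ) (x m ω))
        = if n = m then 1 else 0)
    (X : Ω → ℝ → ℂ)
    (hX : ∀ ω t, X ω t =
      (Real.sqrt (P * Tx / N) : ℂ) *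
        ∑ n : Fin N, x n ω * (p (t - (n : ℕ) * (τ * T)) : ℂ))
    (f : ℝ) :
    (∫ ω, ‖𝓕 (X ω) f‖ ^ 2) = P * Tx * ‖𝓕 (fun t => (p t : ℂ)) f‖ ^ 2 := by
  classical
  have hNR : (0 : ℝ) < (N : ℝ) := by exact_mod_cast Nat.lt_of_lt_of_le Nat.zero_lt_one hN
  set c : ℝ := Real.sqrt (P * Tx / N) with hc
  set pC : ℝ → ℂ := fun t => (p t : ℂ) with hpCdef
  have hpC : Integrable pC (volume : Measure ℝ) := hp1.ofReal
  set a : Fin N → ℝ := fun n => (n : ℕ) * (τ * T) with ha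
  set e : Fin N → ℂ := fun n => (Real.fourierChar (-(a n) * f) : ℂ) with he
  set F : ℂ := 𝓕 pC f with hF
  set S : Ω → ℂ := fun ω => ∑ n, x n ω * e n with hS
  -- Step 1: shift property of the Fourier transform
  have hshift : ∀ n : Fin N, 𝓕 (fun t => pC (t - a n)) f = e n * F := by
    intro n
    have key := VectorFourier.fourierIntegral_comp_add_right (𝕜 := ℝ)
      Real.fourierChar (volume : Measure ℝ) (innerₗ ℝ) pC (-(a n))
    have h2 : (fun t => pC (t - a n)) = pC ∘ fun v => v + -(a n) := by
      funext t; simp [sub_eq_add_neg]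
    have : 𝓕 (fun t => pC (t - a n)) f
        = Real.fourierChar ((innerₗ ℝ) (-(a n)) f) • 𝓕 pC f := by
      show VectorFourier.fourierIntegral Real.fourierChar (volume : Measure ℝ)
            (innerₗ ℝ) (fun t => pC (t - a n)) f = _
      rw [h2, key]
      rfl
    rw [this, Circle.smul_def]
    rw [innerₗ_apply_apply, Real.inner_apply]
    rfl
  -- Step 2: the Fourier transform of the signal
  have hXF : ∀ ω, 𝓕 (X ω) f = (c : ℂ) * F * S ω := by
    intro ω
    have hXeq : X ω = fun t => ∑ n, ((c : ℂ) * x n ω) • pC (t - a n) := by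
      funext t
      rw [hX ω t, Finset.mul_sum]
      refine Finset.sum_congr rfl fun n _ => ?_
      simp only [smul_eq_mul, hpCdef, ha]
      ring
    have hInt : ∀ n : Fin N, Integrable
        (fun t : ℝ => Real.fourierChar (-(((t : ℝ) * f))) • (((c : ℂ) * x n ω) • pC (t - a n)))
        (volume : Measure ℝ) := by
      intro n
      have h1 : Integrable (fun t => pC (t - a n)) (volume : Measure ℝ) :=
        hpC.comp_sub_right (a n)
      have h2 : Integrable (fun t => ((c : ℂ) * x n ω) • pC (t - a n))
          (volume : Measure ℝ) := by exact h1.smul ((c : ℂ) * x n ω)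
      simpa only [Real.inner_apply] using (Real.fourierIntegral_convergent_iff (f := fun t =>
        ((c : ℂ) * x n ω) • pC (t - a n)) f).2 h2
    calc 𝓕 (X ω) f
        = ∫ t : ℝ, Real.fourierChar (-(((t : ℝ) * f))) • (X ω t) := Real.fourier_real_eq _ _
      _ = ∫ t : ℝ, ∑ n, Real.fourierChar (-(((t : ℝ) * f))) •
            (((c : ℂ) * x n ω) • pC (t - a n)) := by
          congr 1; funext t; rw [hXeq]; rw [Finset.smul_sum]
      _ = ∑ n, ∫ t : ℝ, Real.fourierChar (-(((t : ℝ) * f))) •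
            (((c : ℂ) * x n ω) • pC (t - a n)) :=
          integral_finset_sum _ fun n _ => hInt n
      _ = ∑ n, ((c : ℂ) * x n ω) • ∫ t : ℝ, Real.fourierChar (-(((t : ℝ) * f))) •
            pC (t - a n) := by
          refine Finset.sum_congr rfl fun n _ => ?_
          rw [← integral_smul]
          congr 1; funext t; rw [smul_comm]
      _ = ∑ n, ((c : ℂ) * x n ω) • (𝓕 (fun t => pC (t - a n)) f) := by
          refine Finset.sum_congr rfl fun n _ => ?_
          rw [Real.fourier_real_eq]
      _ = ∑ n, ((c : ℂ) * x n ω) * (e n * F) := by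
          refine Finset.sum_congr rfl fun n _ => ?_
          rw [hshift n]; rfl
      _ = (c : ℂ) * F * S ω := by
          rw [hS, Finset.mul_sum]
          refine Finset.sum_congr rfl fun n _ => ?_
          ring
  -- Step 3: the second moment of S
  have hbig : ∀ ω, (‖S ω‖ : ℝ) ^ 2 =
      (∑ n, ∑ m, (e n * (starRingEnd ℂ) (e m)) *
        (x n ω * (starRingEnd ℂ) (x m ω))).re := by
    intro ω
    have h1 : ((‖S ω‖ : ℝ) ^ 2 : ℝ) = (S ω * (starRingEnd ℂ) (S ω)).re := by
      rw [Complex.mul_conj, Complex.ofReal_re, Complex.normSq_eq_norm_sq]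
    rw [h1]
    congr 1
    rw [hS, map_sum, Finset.sum_mul_sum]
    refine Finset.sum_congr rfl fun n _ => Finset.sum_congr rfl fun m _ => ?_
    simp only [map_mul]
    ring
  have hIntnm : ∀ n m : Fin N, Integrable
      (fun ω => (e n * (starRingEnd ℂ) (e m)) * (x n ω * (starRingEnd ℂ) (x m ω)))
      (ℙ : Measure Ω) :=
    fun n m => (integrable_mul_conj_of_memL2 (hx2 n) (hx2 m)).const_mul _
  have hIntSum : Integrable (fun ω => ∑ n : Fin N, ∑ m : Fin N,
      (e n * (starRingEnd ℂ) (e m)) * (x n ω * (starRingEnd ℂ) (x m ω)))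
      (ℙ : Measure Ω) :=
    integrable_finset_sum _ fun n _ => integrable_finset_sum _ fun m _ => hIntnm n m
  have hee : ∀ n : Fin N, e n * (starRingEnd ℂ) (e n) = 1 := by
    intro n
    rw [Complex.mul_conj]
    simp [he]
  have hSint : (∫ ω, ‖S ω‖ ^ 2) = (N : ℝ) := by
    calc (∫ ω, ‖S ω‖ ^ 2)
        = ∫ ω, (∑ n : Fin N, ∑ m : Fin N, (e n * (starRingEnd ℂ) (e m)) *
            (x n ω * (starRingEnd ℂ) (x m ω))).re := by
          congr 1; funext ω; exact hbig ω
      _ = (∫ ω, ∑ n : Fin N, ∑ m : Fin N, (e n * (starRingEnd ℂ) (e m)) *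
            (x n ω * (starRingEnd ℂ) (x m ω))).re := by
          exact_mod_cast integral_re hIntSum
      _ = (∑ n : Fin N, ∑ m : Fin N, (e n * (starRingEnd ℂ) (e m)) *
            (∫ ω, x n ω * (starRingEnd ℂ) (x m ω))).re := by
          rw [integral_finset_sum _ fun n _ =>
            integrable_finset_sum _ fun m _ => hIntnm n m]
          congr 1
          refine Finset.sum_congr rfl fun n _ => ?_
          rw [integral_finset_sum _ fun m _ => hIntnm n m]
          exact Finset.sum_congr rfl fun m _ => integral_const_mul _ _
      _ = (N : ℝ) := by
          have : ∀ n : Fin N, ∑ m : Fin N, (e n * (starRingEnd ℂ) (e m)) *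
              (∫ ω, x n ω * (starRingEnd ℂ) (x m ω)) = 1 := by
            intro n
            rw [Finset.sum_eq_single n]
            · rw [hcov n n, if_pos rfl, mul_one, hee n]
            · intro m _ hm
              rw [hcov n m, if_neg (fun h => hm h.symm), mul_zero]
            · intro h; exact absurd (Finset.mem_univ n) h
          simp only [this, Finset.sum_const, Finset.card_univ, Fintype.card_fin,
            nsmul_eq_mul, mul_one]
          simp
  -- Step 4: put everything together
  have hc2 : c ^ 2 = P * Tx / N := by
    rw [hc, Real.sq_sqrt]
    positivity
  have hnorm : ∀ ω, ‖𝓕 (X ω) f‖ ^ 2 = (P * Tx / N * ‖F‖ ^ 2) * ‖S ω‖ ^ 2 := by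
    intro ω
    rw [hXF ω, norm_mul, norm_mul, Complex.norm_real, Real.norm_eq_abs,
      _root_.abs_of_nonneg (Real.sqrt_nonneg _), mul_pow, mul_pow, ← hc, hc2]
  calc (∫ ω, ‖𝓕 (X ω) f‖ ^ 2)
      = ∫ ω, (P * Tx / N * ‖F‖ ^ 2) * ‖S ω‖ ^ 2 := by
        congr 1; funext ω; exact hnorm ω
    _ = (P * Tx / N * ‖F‖ ^ 2) * ∫ ω, ‖S ω‖ ^ 2 := integral_const_mul _ _
    _ = (P * Tx / N * ‖F‖ ^ 2) * (N : ℝ) := by rw [hSint]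
    _ = P * Tx * ‖F‖ ^ 2 := by field_simp
end

section
/- Fix σ > 0 and x ∈ ℂ with |x| = 1. If y = x + σ·w with w ~ CN(0,1), then the mean of the mismatched information density is E[i_M(x;y)] = ln(1 + 1/σ²). -/
open MeasureTheory ProbabilityTheory

open Real
open scoped NNReal ENNReal

section Aux


private lemma aux_int_sq {b : ℝ} (hb : 0 < b) :
    Integrable (fun x : ℝ => x ^ 2 * Real.exp (-b * x ^ 2)) := by
  have h := integrable_rpow_mul_exp_neg_mul_sq hb (s := 2) (by norm_num)
  have he : ∀ x : ℝ, x ^ (2:ℝ) = x ^ 2 := fun x => by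
    rw [show (2:ℝ) = ((2:ℕ):ℝ) by norm_num, Real.rpow_natCast]
  simpa [he] using h

private lemma aux_integral_sq {b : ℝ} (hb : 0 < b) :
    ∫ x : ℝ, x ^ 2 * Real.exp (-b * x ^ 2) = Real.sqrt (π / b) / (2 * b) := by
  have hu : ∀ y : ℝ, HasDerivAt (fun x : ℝ => x) 1 y := fun y => hasDerivAt_id y
  have hv : ∀ y : ℝ, HasDerivAt (fun x : ℝ => Real.exp (-b * x ^ 2))
      (-(2*b) * (y * Real.exp (-b * y ^ 2))) y := by
    intro y
    have h1 := (((hasDerivAt_pow 2 y).const_mul (-b)).exp :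
      HasDerivAt (fun x : ℝ => Real.exp (-b * x ^ 2))
        (Real.exp (-b * y ^ 2) * (-b * (2 * y ^ 1))) y)
    convert h1 using 1
    ring
  have hIuv' : Integrable ((fun x:ℝ => x) * fun x => -(2*b) * (x * Real.exp (-b*x^2))) := by
    have he : ((fun x:ℝ => x) * fun x => -(2*b) * (x * Real.exp (-b*x^2)))
        = fun x => (-(2*b)) * (x^2 * Real.exp (-b*x^2)) := by
      funext x; simp [Pi.mul_apply]; ring
    rw [he]; exact (aux_int_sq hb).const_mul _
  have hIu'v : Integrable ((fun _:ℝ => (1:ℝ)) * fun x => Real.exp (-b*x^2)) := by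
    have he : ((fun _:ℝ => (1:ℝ)) * fun x => Real.exp (-b*x^2))
        = fun x : ℝ => Real.exp (-b*x^2) := by funext x; simp
    rw [he]; exact integrable_exp_neg_mul_sq hb
  have hIuv : Integrable ((fun x:ℝ => x) * fun x => Real.exp (-b*x^2)) := by
    have he : ((fun x:ℝ => x) * fun x => Real.exp (-b*x^2))
        = fun x : ℝ => x * Real.exp (-b*x^2) := by funext x; simp
    rw [he]; exact integrable_mul_exp_neg_mul_sq hb
  have key := integral_mul_deriv_eq_deriv_mul_of_integrable (fun y _ => hu y) (fun y _ => hv y) hIuv' hIu'v hIuv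
  have l1 : (fun x : ℝ => x * (-(2*b) * (x * Real.exp (-b*x^2))))
      = fun x => (-(2*b)) * (x^2 * Real.exp (-b*x^2)) := by funext x; ring
  rw [l1, MeasureTheory.integral_const_mul] at key
  simp only [one_mul] at key
  rw [integral_gaussian] at key
  have h2b : (2:ℝ) * b ≠ 0 := by positivity
  field_simp at key ⊢
  linarith


private lemma aux_integral_odd {b : ℝ} :
    ∫ x : ℝ, x * Real.exp (-b * x ^ 2) = 0 := by
  have h := MeasureTheory.integral_neg_eq_self (fun x : ℝ => x * Real.exp (-b * x ^ 2))
    (volume : Measure ℝ)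
  simp only [neg_sq, neg_mul] at h
  rw [MeasureTheory.integral_neg] at h
  simp only [neg_mul]
  linarith

private lemma gauss_transfer {v : ℝ≥0} (hv : v ≠ 0) (g : ℝ → ℝ) :
    ∫ a, g a ∂(gaussianReal 0 v) = ∫ a, gaussianPDFReal 0 v a * g a := by
  rw [gaussianReal_of_var_ne_zero _ hv]
  rw [show volume.withDensity (gaussianPDF 0 v)
      = volume.withDensity (fun a => ((Real.toNNReal (gaussianPDFReal 0 v a) : ℝ≥0) : ℝ≥0∞))
      from rfl]
  rw [integral_withDensity_eq_integral_smul
      ((measurable_gaussianPDFReal 0 v).real_toNNReal) g]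
  refine integral_congr_ae (Filter.Eventually.of_forall fun a => ?_)
  simp [NNReal.smul_def, Real.coe_toNNReal _ (gaussianPDFReal_nonneg 0 v a)]

private lemma gauss_integrable {v : ℝ≥0} (hv : v ≠ 0) {g : ℝ → ℝ}
    (hg : Integrable (fun a => gaussianPDFReal 0 v a * g a)) :
    Integrable g (gaussianReal 0 v) := by
  rw [gaussianReal_of_var_ne_zero _ hv]
  rw [show volume.withDensity (gaussianPDF 0 v)
      = volume.withDensity (fun a => ((Real.toNNReal (gaussianPDFReal 0 v a) : ℝ≥0) : ℝ≥0∞))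
      from rfl]
  rw [integrable_withDensity_iff_integrable_smul
      ((measurable_gaussianPDFReal 0 v).real_toNNReal)]
  refine hg.congr (Filter.Eventually.of_forall fun a => ?_)
  simp [NNReal.smul_def, Real.coe_toNNReal _ (gaussianPDFReal_nonneg 0 v a)]

private lemma pdf_eq {v : ℝ≥0} (a : ℝ) :
    gaussianPDFReal 0 v a
      = (Real.sqrt (2 * π * v))⁻¹ * Real.exp (-((2:ℝ) * v)⁻¹ * a ^ 2) := by
  have h : ∀ t : ℝ, -(t - 0)^2/(2*(v:ℝ)) = -((2:ℝ)*v)⁻¹ * t^2 := by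
    intro t; rw [sub_zero]; ring
  rw [gaussianPDFReal, h a]

private lemma gauss_poly {v : ℝ≥0} (hv : v ≠ 0) (c0 c1 c2 : ℝ) :
    Integrable (fun a : ℝ => c0 + c1 * a + c2 * a ^ 2) (gaussianReal 0 v) ∧
    ∫ a, (c0 + c1 * a + c2 * a ^ 2) ∂(gaussianReal 0 v) = c0 + c2 * v := by
  have hv' : (0:ℝ) < v := lt_of_le_of_ne v.coe_nonneg (by exact_mod_cast hv.symm)
  set b : ℝ := ((2:ℝ) * v)⁻¹ with hbdef
  have hb : 0 < b := by positivity
  set K : ℝ := (Real.sqrt (2 * π * v))⁻¹ with hKdef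
  have hK : 0 < K := by positivity
  -- pointwise decomposition
  have hdec : (fun a : ℝ => gaussianPDFReal 0 v a * (c0 + c1 * a + c2 * a ^ 2))
      = fun a : ℝ => c0 * gaussianPDFReal 0 v a
          + (c1 * K) * (a * Real.exp (-b * a ^ 2))
          + (c2 * K) * (a ^ 2 * Real.exp (-b * a ^ 2)) := by
    funext a
    rw [pdf_eq a, hbdef, hKdef]
    ring
  have hA : Integrable (fun a : ℝ => c0 * gaussianPDFReal 0 v a) :=
    (integrable_gaussianPDFReal 0 v).const_mul c0
  have hB : Integrable (fun a : ℝ => (c1 * K) * (a * Real.exp (-b * a ^ 2))) :=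
    (integrable_mul_exp_neg_mul_sq hb).const_mul (c1 * K)
  have hC : Integrable (fun a : ℝ => (c2 * K) * (a ^ 2 * Real.exp (-b * a ^ 2))) :=
    (aux_int_sq hb).const_mul (c2 * K)
  have hAB : Integrable (fun a : ℝ => c0 * gaussianPDFReal 0 v a
      + (c1 * K) * (a * Real.exp (-b * a ^ 2))) := hA.add hB
  have hI : Integrable (fun a : ℝ => gaussianPDFReal 0 v a * (c0 + c1 * a + c2 * a ^ 2)) := by
    rw [hdec]
    exact hAB.add hC
  refine ⟨gauss_integrable hv hI, ?_⟩
  rw [gauss_transfer hv, hdec]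
  rw [integral_add hAB hC, integral_add hA hB,
    integral_const_mul, integral_const_mul, integral_const_mul,
    integral_gaussianPDFReal_eq_one 0 hv, aux_integral_odd, aux_integral_sq hb]
  have h1 : π / b = 2 * π * v := by rw [hbdef]; field_simp
  have h2 : Real.sqrt (2 * π * (v:ℝ)) ≠ 0 := by positivity
  rw [h1, hKdef, hbdef]
  rw [mul_one, mul_zero, add_zero]
  have h3 : (2:ℝ) * ((2:ℝ) * v)⁻¹ = (v:ℝ)⁻¹ := by field_simp
  rw [h3]
  field_simp


private lemma prod_add_integral {μ ν : Measure ℝ} [IsProbabilityMeasure μ] [IsProbabilityMeasure ν]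
    {f g : ℝ → ℝ} (hfc : Continuous f) (hgc : Continuous g)
    (hf : Integrable f μ) (hg : Integrable g ν) :
    ∫ q : ℝ × ℝ, (f q.1 + g q.2) ∂(μ.prod ν) = (∫ a, f a ∂μ) + ∫ a, g a ∂ν := by
  have hmf : Measure.map Prod.fst (μ.prod ν) = μ := by
    rw [Measure.map_fst_prod]; simp
  have hms : Measure.map Prod.snd (μ.prod ν) = ν := by
    rw [Measure.map_snd_prod]; simp
  have h1 : Integrable (fun q : ℝ × ℝ => f q.1) (μ.prod ν) := by
    have := (integrable_map_measure hfc.aestronglyMeasurable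
      measurable_fst.aemeasurable (μ := μ.prod ν)).mp
    rw [hmf] at this
    exact this hf
  have h2 : Integrable (fun q : ℝ × ℝ => g q.2) (μ.prod ν) := by
    have := (integrable_map_measure hgc.aestronglyMeasurable
      measurable_snd.aemeasurable (μ := μ.prod ν)).mp
    rw [hms] at this
    exact this hg
  have e1 : ∫ a, f a ∂μ = ∫ q : ℝ × ℝ, f q.1 ∂(μ.prod ν) := by
    conv_lhs => rw [← hmf]
    exact integral_map measurable_fst.aemeasurable hfc.aestronglyMeasurable
  have e2 : ∫ a, g a ∂ν = ∫ q : ℝ × ℝ, g q.2 ∂(μ.prod ν) := by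
    conv_lhs => rw [← hms]
    exact integral_map measurable_snd.aemeasurable hgc.aestronglyMeasurable
  rw [integral_add h1 h2, e1, e2]

end Aux

/-- The law of a standard complex Gaussian `w = a + i·b`, where `a` and `b` are
independent real Gaussians with mean `0` and variance `1/2`. -/
noncomputable def stdComplexGaussian : Measure ℂ :=
  Measure.map (fun q : ℝ × ℝ => (q.1 : ℂ) + (q.2 : ℂ) * Complex.I)
    ((gaussianReal 0 (1 / 2)).prod (gaussianReal 0 (1 / 2)))

/-- For `σ > 0` and `x, y ∈ ℂ`, `p_σ(y|x) = (1/(πσ²))·exp(−|y−x|²/σ²)` and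
`q_σ(y) = (1/(π(1+σ²)))·exp(−|y|²/(1+σ²))`; the mismatched information density is
`i_M(x;y) = ln (p_σ(y|x) / q_σ(y))`. -/
noncomputable def infoDensity (σ : ℝ) (x y : ℂ) : ℝ :=
  Real.log ((1 / (Real.pi * σ ^ 2) * Real.exp (-‖y - x‖ ^ 2 / σ ^ 2)) /
            (1 / (Real.pi * (1 + σ ^ 2)) * Real.exp (-‖y‖ ^ 2 / (1 + σ ^ 2))))

/-- **Mean of the mismatched information density.**  Fix `σ > 0` and `x ∈ ℂ` with
`|x| = 1`.  If `y = x + σ·w` with `w ~ CN(0,1)`, then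
`E[i_M(x;y)] = ln(1 + 1/σ²)`. -/
theorem infoDensity_mean
    {Ω : Type*} [MeasureSpace Ω] [IsProbabilityMeasure (ℙ : Measure Ω)]
    (σ : ℝ) (hσ : 0 < σ) (x : ℂ) (hx : ‖x‖ = 1)
    (w : Ω → ℂ) (hw : Measurable w)
    (hlaw : Measure.map w (ℙ : Measure Ω) = stdComplexGaussian) :
    (∫ ω, infoDensity σ x (x + (σ : ℂ) * w ω)) = Real.log (1 + 1 / σ ^ 2) := by
  have hσ2 : (0:ℝ) < σ ^ 2 := by positivity
  have h1σ : (0:ℝ) < 1 + σ ^ 2 := by positivity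
  set c : ℝ := Real.log (1 + 1 / σ ^ 2) with hc
  have hsq : ∀ z : ℂ, ‖z‖ ^ 2 = z.re ^ 2 + z.im ^ 2 := fun z => by
    rw [Complex.sq_norm, Complex.normSq_apply]; ring
  set f : ℝ → ℝ := fun a => c + (x.re + σ * a) ^ 2 / (1 + σ ^ 2) - a ^ 2 with hfdef
  set g : ℝ → ℝ := fun t => (x.im + σ * t) ^ 2 / (1 + σ ^ 2) - t ^ 2 with hgdef
  -- pointwise identity
  have hpt : ∀ z : ℂ, infoDensity σ x (x + (σ : ℂ) * z) = f z.re + g z.im := by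
    intro z
    have hA : (0:ℝ) < 1 / (π * σ ^ 2) := by positivity
    have hB : (0:ℝ) < 1 / (π * (1 + σ ^ 2)) := by positivity
    have hnorm1 : ‖x + (σ:ℂ) * z - x‖ ^ 2 = σ ^ 2 * (z.re ^ 2 + z.im ^ 2) := by
      rw [show x + (σ:ℂ) * z - x = (σ:ℂ) * z by ring, hsq]
      simp [Complex.mul_re, Complex.mul_im]
      ring
    have hnorm2 : ‖x + (σ:ℂ) * z‖ ^ 2
        = (x.re + σ * z.re) ^ 2 + (x.im + σ * z.im) ^ 2 := by
      rw [hsq]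
      simp [Complex.add_re, Complex.add_im, Complex.mul_re, Complex.mul_im]
    have e : infoDensity σ x (x + (σ:ℂ) * z)
        = (Real.log (1 / (π * σ ^ 2)) - Real.log (1 / (π * (1 + σ ^ 2))))
          + (-(σ ^ 2 * (z.re ^ 2 + z.im ^ 2)) / σ ^ 2
            - (-((x.re + σ * z.re) ^ 2 + (x.im + σ * z.im) ^ 2) / (1 + σ ^ 2))) := by
      rw [infoDensity, hnorm1, hnorm2,
        Real.log_div (by positivity) (by positivity),
        Real.log_mul hA.ne' (Real.exp_pos _).ne',
        Real.log_mul hB.ne' (Real.exp_pos _).ne',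
        Real.log_exp, Real.log_exp]
      ring
    have hlog : Real.log (1 / (π * σ ^ 2)) - Real.log (1 / (π * (1 + σ ^ 2))) = c := by
      rw [← Real.log_div hA.ne' hB.ne']
      congr 1
      have hπ : (0:ℝ) < π := Real.pi_pos
      field_simp
      ring
    rw [e, hlog, hfdef, hgdef]
    field_simp
    ring
  simp only [hpt]
  -- change of variables
  have hfc : Continuous f := by fun_prop
  have hgc : Continuous g := by fun_prop
  have hFc : Continuous (fun z : ℂ => f z.re + g z.im) :=
    (hfc.comp Complex.continuous_re).add (hgc.comp Complex.continuous_im)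
  rw [← integral_map hw.aemeasurable hFc.aestronglyMeasurable, hlaw, stdComplexGaussian]
  have hφ : Measurable (fun q : ℝ × ℝ => (q.1 : ℂ) + (q.2 : ℂ) * Complex.I) := by fun_prop
  rw [integral_map hφ.aemeasurable hFc.aestronglyMeasurable]
  have hco : ∀ q : ℝ × ℝ,
      f ((q.1 : ℂ) + (q.2 : ℂ) * Complex.I).re + g ((q.1 : ℂ) + (q.2 : ℂ) * Complex.I).im
        = f q.1 + g q.2 := by
    intro q; simp
  simp only [hco]
  -- polynomial forms
  have hv : (1/2 : ℝ≥0) ≠ 0 := by norm_num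
  have hfpoly : f = fun a : ℝ => (c + x.re ^ 2 / (1 + σ ^ 2))
      + (2 * σ * x.re / (1 + σ ^ 2)) * a + (σ ^ 2 / (1 + σ ^ 2) - 1) * a ^ 2 := by
    funext a; rw [hfdef]; field_simp; ring
  have hgpoly : g = fun t : ℝ => (x.im ^ 2 / (1 + σ ^ 2))
      + (2 * σ * x.im / (1 + σ ^ 2)) * t + (σ ^ 2 / (1 + σ ^ 2) - 1) * t ^ 2 := by
    funext t; rw [hgdef]; field_simp; ring
  have hf1 := gauss_poly hv (c + x.re ^ 2 / (1 + σ ^ 2)) (2 * σ * x.re / (1 + σ ^ 2))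
    (σ ^ 2 / (1 + σ ^ 2) - 1)
  have hg1 := gauss_poly hv (x.im ^ 2 / (1 + σ ^ 2)) (2 * σ * x.im / (1 + σ ^ 2))
    (σ ^ 2 / (1 + σ ^ 2) - 1)
  rw [prod_add_integral hfc hgc (hfpoly ▸ hf1.1) (hgpoly ▸ hg1.1)]
  rw [show (∫ a, f a ∂(gaussianReal 0 (1/2))) = ∫ a, ((c + x.re ^ 2 / (1 + σ ^ 2))
      + (2 * σ * x.re / (1 + σ ^ 2)) * a + (σ ^ 2 / (1 + σ ^ 2) - 1) * a ^ 2)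
        ∂(gaussianReal 0 (1/2)) by rw [← hfpoly]]
  rw [show (∫ t, g t ∂(gaussianReal 0 (1/2))) = ∫ t, ((x.im ^ 2 / (1 + σ ^ 2))
      + (2 * σ * x.im / (1 + σ ^ 2)) * t + (σ ^ 2 / (1 + σ ^ 2) - 1) * t ^ 2)
        ∂(gaussianReal 0 (1/2)) by rw [← hgpoly]]
  rw [hf1.2, hg1.2]
  have hx2 : x.re ^ 2 + x.im ^ 2 = 1 := by
    have := hsq x
    rw [hx] at this
    simpa using this.symm
  have hhalf : ((1/2 : ℝ≥0) : ℝ) = 1/2 := by norm_num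
  rw [hhalf]
  have h0 : (1:ℝ) + σ ^ 2 ≠ 0 := h1σ.ne'
  have key : x.re ^ 2 / (1 + σ ^ 2) + x.im ^ 2 / (1 + σ ^ 2) = 1 / (1 + σ ^ 2) := by
    rw [← add_div, hx2]
  have key2 : (1 : ℝ) / (1 + σ ^ 2) + σ ^ 2 / (1 + σ ^ 2) = 1 := by
    rw [← add_div, div_self h0]
  linear_combination key + key2
end

section
/- Let N ≥ 1, let σ_0, …, σ_{N−1} > 0, and let x ∈ ℂᴺ satisfy |x_n| = 1 for all n. Let y_0, …, y_{N−1} be independent with y_n = x_n + σ_n·w'_n, where w'_0, …, w'_{N−1} are i.i.d. CN(0,1). Then the random variable (1/N)·∑_{n=0}^{N−1} (1/(1+σ_n²))·|y_n − (1+σ_n²)·x_n|²/σ_n² has the same distribution as (1/N)·∑_{n=0}^{N−1} (1/(1+σ_n²))·|w_n + σ_n|², where w_0, …, w_{N−1} are i.i.d. CN(0,1); in particular, this distribution (hence the missed-detection probability in the meta-converse bound) does not depend on the choice of x. -/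
open MeasureTheory ProbabilityTheory

/-! ### Auxiliary lemmas -/


lemma map_withDensity_equiv' {α β : Type*} [MeasurableSpace α] [MeasurableSpace β] (e : α ≃ᵐ β)
    (μ : Measure α) (f : α → ENNReal) (hf : Measurable f) :
    (μ.withDensity f).map e = (μ.map e).withDensity (fun b => f (e.symm b)) := by
  ext s hs
  rw [Measure.map_apply e.measurable hs, withDensity_apply _ (e.measurable hs),
    withDensity_apply _ hs, Measure.restrict_map e.measurable hs,
    lintegral_map (show Measurable fun b => f (e.symm b) from hf.comp e.symm.measurable)
      e.measurable]
  simp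

lemma gauss_prod' :
    (gaussianReal 0 (1/2)).prod (gaussianReal 0 (1/2))
      = ((volume : Measure ℝ).prod volume).withDensity
          (fun p => gaussianPDF 0 (1/2) p.1 * gaussianPDF 0 (1/2) p.2) := by
  have hv : (1/2 : NNReal) ≠ 0 := by norm_num
  have hm := measurable_gaussianPDF 0 (1/2 : NNReal)
  refine Measure.prod_eq fun s t hs ht => ?_
  rw [withDensity_apply _ (hs.prod ht), ← Measure.prod_restrict,
    lintegral_prod_mul (hm.aemeasurable) (hm.aemeasurable),
    gaussianReal_apply _ hv s, gaussianReal_apply _ hv t]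

lemma gpdf_mul' (a b : ℝ) :
    gaussianPDF 0 (1/2) a * gaussianPDF 0 (1/2) b
      = ENNReal.ofReal (Real.pi⁻¹ * Real.exp (-(a^2 + b^2))) := by
  rw [gaussianPDF, gaussianPDF, ← ENNReal.ofReal_mul (gaussianPDFReal_nonneg _ _ _)]
  congr 1
  simp only [gaussianPDFReal, sub_zero]
  have h2 : ((1/2 : NNReal) : ℝ) = 1/2 := by norm_num
  rw [h2]
  have hπ : (0:ℝ) < Real.pi := Real.pi_pos
  have hsq : Real.sqrt (2 * Real.pi * (1/2)) = Real.sqrt Real.pi := by ring_nf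
  rw [hsq]
  have hs : Real.sqrt Real.pi * Real.sqrt Real.pi = Real.pi := Real.mul_self_sqrt hπ.le
  have hsne : Real.sqrt Real.pi ≠ 0 := by positivity
  have hea : -a^2 / (2 * (1/2)) = -a^2 := by norm_num
  have heb : -b^2 / (2 * (1/2)) = -b^2 := by norm_num
  rw [hea, heb]
  rw [show Real.pi⁻¹ = (Real.sqrt Real.pi)⁻¹ * (Real.sqrt Real.pi)⁻¹ by
    rw [← mul_inv, hs],
    show -(a^2 + b^2) = (-a^2) + (-b^2) by ring, Real.exp_add]
  ring

lemma std_eq_withDensity' :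
    stdComplexGaussian = (volume : Measure ℂ).withDensity
      (fun z => ENNReal.ofReal (Real.pi⁻¹ * Real.exp (-(‖z‖^2)))) := by
  have hfun : (fun q : ℝ × ℝ => (q.1 : ℂ) + (q.2 : ℂ) * Complex.I)
      = ⇑Complex.measurableEquivRealProd.symm := by
    funext q
    simp [Complex.measurableEquivRealProd, Complex.equivRealProdCLM_symm_apply]
  have hm : Measurable fun p : ℝ × ℝ => gaussianPDF 0 (1/2) p.1 * gaussianPDF 0 (1/2) p.2 :=
    ((measurable_gaussianPDF 0 (1/2)).comp measurable_fst).mul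
      ((measurable_gaussianPDF 0 (1/2)).comp measurable_snd)
  rw [stdComplexGaussian, hfun, gauss_prod',
    map_withDensity_equiv' Complex.measurableEquivRealProd.symm _ _ hm]
  rw [show Measure.map (⇑Complex.measurableEquivRealProd.symm)
        ((volume : Measure ℝ).prod volume) = (volume : Measure ℂ) from
      (MeasurePreserving.symm _ Complex.volume_preserving_equiv_real_prod).map_eq]
  congr 1
  funext z
  simp only [MeasurableEquiv.symm_symm]
  rw [show Complex.measurableEquivRealProd z = (z.re, z.im) from rfl]
  rw [gpdf_mul']
  congr 2
  rw [Complex.sq_norm, Complex.normSq_apply]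
  ring

instance : IsProbabilityMeasure stdComplexGaussian := by
  rw [stdComplexGaussian]
  exact Measure.isProbabilityMeasure_map (by fun_prop)

lemma std_rotation' {c : ℂ} (hc : ‖c‖ = 1) :
    Measure.map (fun z => c * z) stdComplexGaussian = stdComplexGaussian := by
  have hc' : c ∈ Metric.sphere (0:ℂ) 1 := by
    simp [mem_sphere_iff_norm, hc]
  set u : Circle := ⟨c, hc'⟩
  have hd : Measurable fun z : ℂ => ENNReal.ofReal (Real.pi⁻¹ * Real.exp (-(‖z‖^2))) := by
    fun_prop
  have he : (fun z : ℂ => c * z) = ⇑(rotation u).toMeasurableEquiv := by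
    funext z; simp [rotation_apply, u]; exact (rotation_apply u z).symm
  rw [std_eq_withDensity', he,
    map_withDensity_equiv' _ _ _ hd,
    show Measure.map (⇑(rotation u).toMeasurableEquiv) volume = volume from
      (rotation u).measurePreserving.map_eq]
  congr 1
  funext z
  congr 3
  rw [show ((rotation u).toMeasurableEquiv.symm z : ℂ) = (rotation u).symm z from rfl,
    LinearIsometryEquiv.norm_map]

lemma joint_law_pi' {ι Ω : Type*} [Fintype ι] [MeasureSpace Ω]
    [IsProbabilityMeasure (ℙ : Measure Ω)]
    (X : ι → Ω → ℂ) (hm : ∀ i, Measurable (X i))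
    (h : iIndepFun X (ℙ : Measure Ω)) :
    Measure.map (fun ω i => X i ω) (ℙ : Measure Ω)
      = Measure.pi (fun i => Measure.map (X i) (ℙ : Measure Ω)) := by
  haveI : ∀ i, IsProbabilityMeasure (Measure.map (X i) (ℙ : Measure Ω)) :=
    fun i => Measure.isProbabilityMeasure_map (hm i).aemeasurable
  refine (Measure.pi_eq fun s hs => ?_).symm
  rw [Measure.map_apply (measurable_pi_iff.mpr hm) (MeasurableSet.univ_pi hs)]
  have hpre : (fun ω i => X i ω) ⁻¹' Set.pi Set.univ s = ⋂ i ∈ Finset.univ, X i ⁻¹' s i := by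
    ext ω; simp [Set.mem_pi]
  rw [hpre, h.measure_inter_preimage_eq_mul Finset.univ (fun i _ => hs i)]
  refine Finset.prod_congr rfl fun i _ => ?_
  rw [Measure.map_apply (hm i) (hs i)]

lemma term_eq' {s : ℝ} (hs : 0 < s) {ξ : ℂ} (hξ : ‖ξ‖ = 1) (w : ℂ) :
    ‖(ξ + (s:ℂ)*w) - ((1 + s^2 : ℝ):ℂ)*ξ‖^2 / s^2
      = ‖(-(starRingEnd ℂ ξ)) * w + (s:ℂ)‖^2 := by
  have hconj : (starRingEnd ℂ ξ) * ξ = 1 := by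
    rw [← Complex.normSq_eq_conj_mul_self]
    rw [show Complex.normSq ξ = ‖ξ‖^2 from Complex.normSq_eq_norm_sq ξ,
      hξ]
    norm_num
  have h1 : (ξ + (s:ℂ)*w) - ((1+s^2:ℝ):ℂ)*ξ = (s:ℂ) * (w - (s:ℂ)*ξ) := by
    push_cast; ring
  have h2 : (-(starRingEnd ℂ ξ)) * w + (s:ℂ) = (-(starRingEnd ℂ ξ)) * (w - (s:ℂ)*ξ) := by
    have : (-(starRingEnd ℂ ξ)) * (w - (s:ℂ)*ξ)
        = (-(starRingEnd ℂ ξ)) * w + (s:ℂ) * ((starRingEnd ℂ ξ) * ξ) := by ring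
    rw [this, hconj, mul_one]
  rw [h1, h2, norm_mul, norm_mul, norm_neg, RCLike.norm_conj, hξ, one_mul,
    Complex.norm_real, Real.norm_eq_abs, abs_of_pos hs, mul_pow]
  field_simp

/-- **The missed-detection statistic of the meta-converse bound does not depend on the
codeword.**  Let `N ≥ 1`, `σ_n > 0`, and `x ∈ ℂᴺ` with `|x_n| = 1` for all `n`.  Let
`y_n = x_n + σ_n·w'_n` with `w'_0, …, w'_{N−1}` i.i.d. `CN(0,1)`.  Then
`(1/N)·∑ₙ (1/(1+σ_n²))·|y_n − (1+σ_n²)·x_n|²/σ_n²` has the same distribution as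
`(1/N)·∑ₙ (1/(1+σ_n²))·|w_n + σ_n|²` with `w_0, …, w_{N−1}` i.i.d. `CN(0,1)`;
in particular this distribution does not depend on the choice of `x`. -/
theorem missedDetection_sum_statistic_law
    {Ω₁ Ω₂ : Type*} [MeasureSpace Ω₁] [MeasureSpace Ω₂]
    [IsProbabilityMeasure (ℙ : Measure Ω₁)] [IsProbabilityMeasure (ℙ : Measure Ω₂)]
    (N : ℕ) (hN : 1 ≤ N) (σ : Fin N → ℝ) (hσ : ∀ n, 0 < σ n)
    (x : Fin N → ℂ) (hx : ∀ n, ‖x n‖ = 1)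
    (W' : Fin N → Ω₁ → ℂ) (hW'm : ∀ n, Measurable (W' n))
    (hW'indep : iIndepFun W'
      (ℙ : Measure Ω₁))
    (hW'law : ∀ n, Measure.map (W' n) (ℙ : Measure Ω₁) = stdComplexGaussian)
    (W : Fin N → Ω₂ → ℂ) (hWm : ∀ n, Measurable (W n))
    (hWindep : iIndepFun W
      (ℙ : Measure Ω₂))
    (hWlaw : ∀ n, Measure.map (W n) (ℙ : Measure Ω₂) = stdComplexGaussian) :
    Measure.map
        (fun ω => (1 / N : ℝ) * ∑ n : Fin N, (1 / (1 + (σ n) ^ 2)) *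
          (‖(x n + (σ n : ℂ) * W' n ω) - ((1 + (σ n) ^ 2 : ℝ) : ℂ) * x n‖ ^ 2
            / (σ n) ^ 2))
        (ℙ : Measure Ω₁)
      = Measure.map
        (fun ω => (1 / N : ℝ) * ∑ n : Fin N, (1 / (1 + (σ n) ^ 2)) *
          ‖W n ω + (σ n : ℂ)‖ ^ 2)
        (ℙ : Measure Ω₂) := by
  classical
  set c : Fin N → ℂ := fun n => -(starRingEnd ℂ (x n)) with hc_def
  have hc : ∀ n, ‖c n‖ = 1 := fun n => by
    rw [hc_def]; simp [RCLike.norm_conj, hx n]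
  set F : (Fin N → ℂ) → ℝ := fun v => (1 / N : ℝ) * ∑ n : Fin N,
    (1 / (1 + (σ n) ^ 2)) * ‖v n + (σ n : ℂ)‖ ^ 2 with hF_def
  have hF : Measurable F := by
    apply Measurable.const_mul
    exact Finset.measurable_sum _ fun n _ =>
      (((measurable_pi_apply n).add_const _).norm.pow_const 2).const_mul _
  -- rewrite LHS statistic as F of rotated noise
  have hLHSfun : (fun ω => (1 / N : ℝ) * ∑ n : Fin N, (1 / (1 + (σ n) ^ 2)) *
      (‖(x n + (σ n : ℂ) * W' n ω) - ((1 + (σ n) ^ 2 : ℝ) : ℂ) * x n‖ ^ 2 / (σ n) ^ 2))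
      = F ∘ (fun ω n => c n * W' n ω) := by
    funext ω
    simp only [Function.comp, hF_def]
    congr 1
    refine Finset.sum_congr rfl fun n _ => ?_
    congr 1
    exact term_eq' (hσ n) (hx n) (W' n ω)
  have hRHSfun : (fun ω => (1 / N : ℝ) * ∑ n : Fin N, (1 / (1 + (σ n) ^ 2)) *
      ‖W n ω + (σ n : ℂ)‖ ^ 2) = F ∘ (fun ω n => W n ω) := rfl
  rw [hLHSfun, hRHSfun]
  have hvec1 : Measurable (fun ω n => W' n ω) := measurable_pi_iff.mpr hW'm
  have hvec2 : Measurable (fun ω n => W n ω) := measurable_pi_iff.mpr hWm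
  have hT : Measurable (fun v : Fin N → ℂ => fun n => c n * v n) :=
    measurable_pi_iff.mpr fun n => (measurable_pi_apply n).const_mul _
  have hrot : (fun ω (n : Fin N) => c n * W' n ω)
      = (fun v : Fin N → ℂ => fun n => c n * v n) ∘ (fun ω n => W' n ω) := rfl
  rw [← Measure.map_map hF (hrot ▸ hT.comp hvec1), ← Measure.map_map hF hvec2]
  congr 1
  -- joint laws
  have hjoint1 : Measure.map (fun ω n => W' n ω) (ℙ : Measure Ω₁)
      = Measure.pi (fun _ : Fin N => stdComplexGaussian) := by
    rw [joint_law_pi' W' hW'm hW'indep]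
    congr 1; funext n; exact hW'law n
  have hjoint2 : Measure.map (fun ω n => W n ω) (ℙ : Measure Ω₂)
      = Measure.pi (fun _ : Fin N => stdComplexGaussian) := by
    rw [joint_law_pi' W hWm hWindep]
    congr 1; funext n; exact hWlaw n
  rw [hrot, ← Measure.map_map hT hvec1, hjoint1, hjoint2]
  exact (MeasureTheory.measurePreserving_pi _ _
    (fun n => ⟨measurable_const_mul (c n), std_rotation' (hc n)⟩)).map_eq
end

section
/- Let N ≥ 1, N₀ > 0, B > 0, ε ∈ (0,1), and μ_n ∈ [0,1] for 0 ≤ n ≤ N−1. Consider the feasible set S = {P ∈ ℝᴺ : P_n ≥ 0 for all n, ∑_n P_n·(1−μ_n) ≤ ε·B, and ∑_n P_n ≤ B}. Suppose θ₁ > 0 and θ₂ > 0 are such that the vector P* with entries P*_n = max{0, B/(θ₁(1−μ_n)+θ₂) − N₀} satisfies both constraints with equality: ∑_n P*_n·(1−μ_n) = ε·B and ∑_n P*_n = B. Then P* maximizes the objective F(P) = ∑_{n=0}^{N−1} log₂(1 + P_n/N₀) over S, i.e., F(P) ≤ F(P*) for every P ∈ S. -/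
open scoped BigOperators

/-- **Optimality of the water-filling power allocation.**
Let `N ≥ 1`, `N₀ > 0`, `B > 0`, `ε ∈ (0,1)`, and `μ_n ∈ [0,1]`.  Consider the feasible
set of power allocations `P ∈ ℝᴺ` with `P_n ≥ 0`, `∑ P_n (1−μ_n) ≤ ε B`, and
`∑ P_n ≤ B`.  Suppose `θ₁ > 0` and `θ₂ > 0` are such that the water-filling vector
`P*_n = max {0, B/(θ₁(1−μ_n)+θ₂) − N₀}` satisfies both constraints with equality.
Then `P*` maximizes `F(P) = ∑ log₂(1 + P_n/N₀)` over the feasible set. -/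
theorem waterfilling_optimal
    (N : ℕ) (hN : 1 ≤ N) (N₀ B ε : ℝ) (hN₀ : 0 < N₀) (hB : 0 < B)
    (hε : ε ∈ Set.Ioo (0 : ℝ) 1)
    (μ : Fin N → ℝ) (hμ : ∀ n, μ n ∈ Set.Icc (0 : ℝ) 1)
    (θ₁ θ₂ : ℝ) (hθ₁ : 0 < θ₁) (hθ₂ : 0 < θ₂)
    (Pstar : Fin N → ℝ)
    (hPstar : ∀ n, Pstar n = max 0 (B / (θ₁ * (1 - μ n) + θ₂) - N₀))
    (heq1 : ∑ n, Pstar n * (1 - μ n) = ε * B)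
    (heq2 : ∑ n, Pstar n = B) :
    ∀ Q : Fin N → ℝ, (∀ n, 0 ≤ Q n) →
      (∑ n, Q n * (1 - μ n)) ≤ ε * B → (∑ n, Q n) ≤ B →
      (∑ n, Real.logb 2 (1 + Q n / N₀)) ≤ ∑ n, Real.logb 2 (1 + Pstar n / N₀) := by
  intro Q hQ hQ1 hQ2
  have hlog2 : (0:ℝ) < Real.log 2 := Real.log_pos (by norm_num)
  have hc : ∀ n, 0 < θ₁ * (1 - μ n) + θ₂ := by
    intro n
    have h1 : 0 ≤ 1 - μ n := by linarith [(hμ n).2]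
    nlinarith
  have hPnn : ∀ n, 0 ≤ Pstar n := fun n => (hPstar n) ▸ le_max_left _ _
  have key : ∀ n, Real.log (1 + Q n / N₀) - Real.log (1 + Pstar n / N₀) ≤
      (Q n - Pstar n) * ((θ₁ * (1 - μ n) + θ₂) / B) := by
    intro n
    set c := θ₁ * (1 - μ n) + θ₂ with hcdef
    have hcn := hc n
    have hQn := hQ n
    have hPn := hPnn n
    have h1 : (0:ℝ) < N₀ + Pstar n := by linarith
    have h2 : (0:ℝ) < N₀ + Q n := by linarith
    have step1 : Real.log (1 + Q n / N₀) - Real.log (1 + Pstar n / N₀)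
        = Real.log ((N₀ + Q n) / (N₀ + Pstar n)) := by
      rw [Real.log_div (by positivity) (by positivity)]
      have e1 : 1 + Q n / N₀ = (N₀ + Q n) / N₀ := by field_simp
      have e2 : 1 + Pstar n / N₀ = (N₀ + Pstar n) / N₀ := by field_simp
      rw [e1, e2, Real.log_div (by positivity) hN₀.ne',
        Real.log_div (by positivity) hN₀.ne']
      ring
    have step2 : Real.log ((N₀ + Q n) / (N₀ + Pstar n)) ≤
        (Q n - Pstar n) / (N₀ + Pstar n) := by
      have := Real.log_le_sub_one_of_pos (show (0:ℝ) < (N₀ + Q n) / (N₀ + Pstar n) by positivity)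
      have e : (N₀ + Q n) / (N₀ + Pstar n) - 1 = (Q n - Pstar n) / (N₀ + Pstar n) := by
        field_simp
        ring
      linarith [e ▸ this]
    have step3 : (Q n - Pstar n) / (N₀ + Pstar n) ≤ (Q n - Pstar n) * (c / B) := by
      rcases eq_or_lt_of_le hPn with hP0 | hPpos
      · -- Pstar n = 0
        have hle : B / c ≤ N₀ := by
          by_contra h
          push_neg at h
          have h' := hPstar n
          rw [← hcdef, ← hP0, max_eq_right (by linarith)] at h'
          linarith
        have hBle : B ≤ N₀ * c := by
          rw [hcdef]
          have := (div_le_iff₀ hcn).mp hle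
          linarith
        rw [← hP0, div_le_iff₀ (by linarith : (0:ℝ) < N₀ + 0), ← sub_nonneg]
        have e3 : (Q n - 0) * (c / B) * (N₀ + 0) - (Q n - 0) = Q n * (N₀ * c - B) / B := by
          field_simp; ring
        rw [e3]
        exact div_nonneg (mul_nonneg hQn (by linarith)) hB.le
      · -- Pstar n > 0
        have hPeq : Pstar n = B / c - N₀ := by
          have h' := hPstar n
          rw [← hcdef] at h'
          rcases max_cases (0:ℝ) (B / c - N₀) with ⟨h1', h2'⟩ | ⟨h1', h2'⟩
          · rw [h1'] at h'; linarith
          · rw [h1'] at h'; exact h'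
        have hNP : N₀ + Pstar n = B / c := by rw [hPeq]; ring
        rw [hNP, div_div_eq_mul_div, mul_div_assoc]
    linarith [step1 ▸ (le_trans step2 step3)]
  have sum_key : ∑ n, Real.log (1 + Q n / N₀) ≤ ∑ n, Real.log (1 + Pstar n / N₀) := by
    have h1 : ∑ n, (Real.log (1 + Q n / N₀) - Real.log (1 + Pstar n / N₀)) ≤
        ∑ n, (Q n - Pstar n) * ((θ₁ * (1 - μ n) + θ₂) / B) :=
      Finset.sum_le_sum fun n _ => key n
    have hA : ∑ n, (Q n - Pstar n) * (1 - μ n) = (∑ n, Q n * (1 - μ n)) - ε * B := by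
      simp only [sub_mul, Finset.sum_sub_distrib, heq1]
    have hBsum : ∑ n, (Q n - Pstar n) = (∑ n, Q n) - B := by
      simp only [Finset.sum_sub_distrib, heq2]
    have h2 : ∑ n, (Q n - Pstar n) * ((θ₁ * (1 - μ n) + θ₂) / B)
        = (θ₁ * ((∑ n, Q n * (1 - μ n)) - ε * B) + θ₂ * ((∑ n, Q n) - B)) / B := by
      rw [← hA, ← hBsum, Finset.mul_sum, Finset.mul_sum, ← Finset.sum_add_distrib,
        Finset.sum_div]
      apply Finset.sum_congr rfl
      intro n _
      field_simp
    have h3 : (θ₁ * ((∑ n, Q n * (1 - μ n)) - ε * B) + θ₂ * ((∑ n, Q n) - B)) / B ≤ 0 := by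
      apply div_nonpos_of_nonpos_of_nonneg _ hB.le
      nlinarith
    rw [Finset.sum_sub_distrib] at h1
    linarith
  calc ∑ n, Real.logb 2 (1 + Q n / N₀) = (∑ n, Real.log (1 + Q n / N₀)) / Real.log 2 := by
        simp [Real.logb, Finset.sum_div]
    _ ≤ (∑ n, Real.log (1 + Pstar n / N₀)) / Real.log 2 := by gcongr
    _ = ∑ n, Real.logb 2 (1 + Pstar n / N₀) := by simp [Real.logb, Finset.sum_div]
end
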